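/- arXiv:1710.05520 — 2 statements merged into one kernel-verified Lean document; each statement's English description precedes it below -/
import Mathlib

section
/- Let f be a function on images of the logistic-regression form f(s) = C · exp(Σ_{i ∈ P} a_i · s(i)) with C ≠ 0 chosen so that f is normalized, where a_i are real coefficients and s(i) ∈ {0,1} is the value of pixel i. Then for every bipartition P = A ⊔ B, the entanglement entropy of f vanishes: S(ρ^A) = 0. -/
/-- The von Neumann entropy of a Hermitian matrix:
`S(ρ) = ∑ k, negMulLog (λ_k)` where `λ_k` are the eigenvalues of `ρ`. -/
noncomputable def vonNeumannEntropy {n : Type*} [Fintype n] [DecidableEq n]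
    {ρ : Matrix n n ℂ} (hρ : ρ.IsHermitian) : ℝ :=
  ∑ k, Real.negMulLog (hρ.eigenvalues k)

/-- A normalized function of the logistic-regression form
`f s = C * exp (∑ i, a i * s i)` (with `C ≠ 0`, real coefficients `a i`, and
`s i ∈ {0,1}`) has vanishing entanglement entropy `S(ρ^A) = 0` for every
bipartition `P = A ⊔ B`. -/
theorem logistic_regression_entropy_zero
    (A B : Type*) [Fintype A] [Fintype B] [DecidableEq A] [DecidableEq B]
    (f : (A ⊕ B → Bool) → ℂ) (a : A ⊕ B → ℝ) (C : ℂ) (hC : C ≠ 0)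
    (hform : ∀ s, f s = C * Complex.exp (∑ i, (a i : ℂ) * (if s i then 1 else 0)))
    (hf : ∑ s, ‖f s‖ ^ 2 = 1)
    (ρA : Matrix (A → Bool) (A → Bool) ℂ)
    (hρA : ∀ sA s'A, ρA sA s'A =
      ∑ sB : B → Bool, (starRingEnd ℂ) (f (Sum.elim sA sB)) * f (Sum.elim s'A sB))
    (hherm : ρA.IsHermitian) :
    vonNeumannEntropy hherm = 0 := by
  classical
  -- factorization of f
  set g : (A → Bool) → ℂ := fun sA =>
    C * Complex.exp (∑ i, (a (Sum.inl i) : ℂ) * (if sA i then 1 else 0)) with hg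
  set h : (B → Bool) → ℂ := fun sB =>
    Complex.exp (∑ i, (a (Sum.inr i) : ℂ) * (if sB i then 1 else 0)) with hh
  have hfgh : ∀ sA sB, f (Sum.elim sA sB) = g sA * h sB := by
    intro sA sB
    rw [hform]
    simp only [hg, hh, Fintype.sum_sum_type, Sum.elim_inl, Sum.elim_inr, Complex.exp_add]
    exact (mul_assoc _ _ _).symm
  set T : ℂ := ∑ sB, (starRingEnd ℂ) (h sB) * h sB with hT
  set G : ℂ := ∑ sA, (starRingEnd ℂ) (g sA) * g sA with hG
  have hGT : G * T = 1 := by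
    have key : G * T = ∑ p : (A → Bool) × (B → Bool), ((‖f (Sum.elim p.1 p.2)‖ : ℂ))^2 := by
      rw [hG, hT, Finset.sum_mul_sum, Fintype.sum_prod_type]
      have hconj : ∀ z : ℂ, (starRingEnd ℂ) z * z = ((‖z‖ : ℝ) : ℂ)^2 := by
        intro z
        rw [mul_comm, Complex.mul_conj, Complex.normSq_eq_norm_sq]
        push_cast
        ring
      refine Finset.sum_congr rfl fun x _ => Finset.sum_congr rfl fun y _ => ?_
      have hr : ((‖g ((x,y).1) * h ((x,y).2)‖ : ℝ) : ℂ)^2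
          = (starRingEnd ℂ) (g x * h y) * (g x * h y) := (hconj _).symm
      rw [hfgh, hr]
      simp only [map_mul]
      ring
    have key2 : ∑ s : (A ⊕ B → Bool), ((‖f s‖ : ℂ))^2
        = ∑ p : (A → Bool) × (B → Bool), ((‖f (Sum.elim p.1 p.2)‖ : ℂ))^2 := by
      refine Fintype.sum_equiv (Equiv.sumArrowEquivProdArrow A B Bool) _ _ fun s => ?_
      have hs : Sum.elim ((Equiv.sumArrowEquivProdArrow A B Bool) s).1
          ((Equiv.sumArrowEquivProdArrow A B Bool) s).2 = s := by
        funext i; cases i <;> rfl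
      rw [hs]
    rw [key, ← key2]
    have : ((1:ℝ):ℂ) = ∑ s : (A ⊕ B → Bool), ((‖f s‖ : ℂ))^2 := by
      rw [← hf]; push_cast; rfl
    rw [← this, Complex.ofReal_one]
  have hρ' : ∀ x y, ρA x y = (starRingEnd ℂ) (g x) * g y * T := by
    intro x y
    rw [hρA]
    rw [show (∑ sB, (starRingEnd ℂ) (f (Sum.elim x sB)) * f (Sum.elim y sB))
        = ∑ sB, (starRingEnd ℂ) (g x) * g y * ((starRingEnd ℂ) (h sB) * h sB) from
      Finset.sum_congr rfl fun sB _ => by rw [hfgh, hfgh, map_mul]; ring]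
    rw [← Finset.mul_sum]
  -- idempotence
  have hidem : ρA * ρA = ρA := by
    ext x z
    rw [Matrix.mul_apply]
    calc ∑ y, ρA x y * ρA y z
        = ∑ y, ((starRingEnd ℂ) (g x) * g z * T * T) * ((starRingEnd ℂ) (g y) * g y) := by
          refine Finset.sum_congr rfl fun y _ => ?_
          rw [hρ', hρ']; ring
      _ = ((starRingEnd ℂ) (g x) * g z * T) * (G * T) := by
          rw [← Finset.mul_sum, ← hG]; ring
      _ = ρA x z := by rw [hGT, mul_one, hρ']
  -- each eigenvalue is 0 or 1
  have heig : ∀ k, hherm.eigenvalues k = 0 ∨ hherm.eigenvalues k = 1 := by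
    intro k
    obtain ⟨v, hv, hvne⟩ : ∃ v : (A → Bool) → ℂ,
        ρA.mulVec v = hherm.eigenvalues k • v ∧ v ≠ 0 := by
      refine ⟨_, hherm.mulVec_eigenvectorBasis k, ?_⟩
      intro h0
      refine hherm.eigenvectorBasis.orthonormal.ne_zero k ?_
      ext i
      exact congrFun h0 i
    have h2 : ρA.mulVec v = (hherm.eigenvalues k * hherm.eigenvalues k) • v := by
      conv_lhs => rw [← hidem, ← Matrix.mulVec_mulVec, hv]
      rw [Matrix.mulVec_smul, hv, smul_smul]
    have h4 : (hherm.eigenvalues k * hherm.eigenvalues k - hherm.eigenvalues k) • v = 0 := by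
      rw [sub_smul, ← h2, hv, sub_self]
    rcases smul_eq_zero.mp h4 with h5 | h5
    · have h6 : hherm.eigenvalues k * (hherm.eigenvalues k - 1) = 0 := by
        linear_combination h5
      rcases mul_eq_zero.mp h6 with h7 | h7
      · exact Or.inl h7
      · exact Or.inr (by linarith)
    · exact absurd h5 hvne
  unfold vonNeumannEntropy
  refine Finset.sum_eq_zero fun k _ => ?_
  rcases heig k with h0 | h0 <;> rw [h0] <;> simp [Real.negMulLog]
end

section
/- Sub-volume-law bound: let S_I be a nonempty finite set of images over P = A ⊔ B, let F be the normalized indicator target function of S_I (F(s) = 1/√|S_I| if s ∈ S_I, else 0), and let R ⊆ A. Suppose that for all images s_A, s'_A over A, the number N_{s_A s'_A} of images s_B over B with both (s_A, s_B) ∈ S_I and (s'_A, s_B) ∈ S_I depends only on the restrictions of s_A and s'_A to R. Then the entanglement entropy of F satisfies S(ρ^A) ≤ |R| · log 2. -/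
/-- Entropy of a prob. vector with support size ≤ d is at most log d. -/
lemma aux_entropy_le_log {ι : Type*} [Fintype ι] (w : ι → ℝ) (hw : ∀ i, 0 ≤ w i)
    (hsum : ∑ i, w i = 1) (d : ℕ)
    (hcard : (Finset.univ.filter (fun i => w i ≠ 0)).card ≤ d) :
    ∑ i, Real.negMulLog (w i) ≤ Real.log d := by
  classical
  set T := Finset.univ.filter (fun i => w i ≠ 0) with hT
  have hsumT : ∑ i ∈ T, w i = 1 := by
    rw [hT, Finset.sum_filter_ne_zero]; exact hsum
  have hwpos : ∀ i ∈ T, 0 < w i := by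
    intro i hi
    have : w i ≠ 0 := (Finset.mem_filter.mp hi).2
    exact lt_of_le_of_ne (hw i) (Ne.symm this)
  have h1 : ∑ i, Real.negMulLog (w i) = ∑ i ∈ T, w i • Real.log (w i)⁻¹ := by
    rw [← Finset.sum_filter_of_ne (p := fun i => w i ≠ 0)
      (f := fun i => Real.negMulLog (w i)) (fun x _ hx => by
        intro h; apply hx; simp only [h, Real.negMulLog_zero])]
    apply Finset.sum_congr rfl
    intro i _
    rw [Real.log_inv, Real.negMulLog, smul_eq_mul]
    ring
  have hjensen : ∑ i ∈ T, w i • Real.log (w i)⁻¹ ≤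
      Real.log (∑ i ∈ T, w i • (w i)⁻¹) := by
    apply (strictConcaveOn_log_Ioi.concaveOn).le_map_sum
    · exact fun i hi => (hwpos i hi).le
    · exact hsumT
    · intro i hi
      exact Set.mem_Ioi.mpr (inv_pos.mpr (hwpos i hi))
  have hsum2 : ∑ i ∈ T, w i • (w i)⁻¹ = (T.card : ℝ) := by
    rw [Finset.sum_congr rfl (fun i hi => by
      rw [smul_eq_mul, mul_inv_cancel₀ (hwpos i hi).ne'])]
    simp
  have hTne : 0 < T.card := by
    rcases Finset.eq_empty_or_nonempty T with h | h
    · exfalso; rw [h] at hsumT; simp at hsumT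
    · exact Finset.card_pos.mpr h
  calc ∑ i, Real.negMulLog (w i) = ∑ i ∈ T, w i • Real.log (w i)⁻¹ := h1
    _ ≤ Real.log (T.card : ℝ) := by rw [← hsum2]; exact hjensen
    _ ≤ Real.log (d : ℝ) := by
        apply Real.log_le_log (by exact_mod_cast hTne)
        exact_mod_cast hcard

/-- Sum of eigenvalues of a Hermitian complex matrix equals its trace. -/
lemma aux_sum_eigenvalues {n : Type*} [Fintype n] [DecidableEq n]
    {ρ : Matrix n n ℂ} (hρ : ρ.IsHermitian) :
    (↑(∑ k, hρ.eigenvalues k) : ℂ) = ρ.trace := by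
  conv_rhs => rw [hρ.spectral_theorem]
  rw [Unitary.conjStarAlgAut_apply, Matrix.trace_mul_cycle]
  rw [show (star (hρ.eigenvectorUnitary : Matrix n n ℂ)) *
      (hρ.eigenvectorUnitary : Matrix n n ℂ) = 1 from
    Unitary.coe_star_mul_self hρ.eigenvectorUnitary, one_mul]
  simp [Matrix.trace_diagonal]

open ComplexOrder in
private lemma aux_eig_nonneg {n m : Type*} [Fintype n] [Fintype m] [DecidableEq n]
    (M : Matrix m n ℂ) {ρ : Matrix n n ℂ} (hρ : ρ = M.conjTranspose * M)
    (hherm : ρ.IsHermitian) (k : n) : 0 ≤ hherm.eigenvalues k := by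
  subst hρ
  exact (Matrix.posSemidef_conjTranspose_mul_self M).eigenvalues_nonneg k


/-- sub-volume-law bound: let `S_I` be a nonempty finite set of
images over `P = A ⊔ B`, let `F` be its normalized indicator target function,
and let `R ⊆ A`. If the count `N_{s_A s'_A}` of images `s_B` over `B` with both
`(s_A, s_B) ∈ S_I` and `(s'_A, s_B) ∈ S_I` depends only on the restrictions of
`s_A` and `s'_A` to `R`, then the entanglement entropy of `F` satisfies
`S(ρ^A) ≤ |R| * log 2`. -/
theorem entanglement_entropy_sub_volume_law
    (A B : Type*) [Fintype A] [Fintype B] [DecidableEq A] [DecidableEq B]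
    (SI : Finset (A ⊕ B → Bool)) (hSI : SI.Nonempty)
    (F : (A ⊕ B → Bool) → ℂ)
    (hF : ∀ s, F s = if s ∈ SI then (1 / Real.sqrt SI.card : ℂ) else 0)
    (R : Finset A)
    (N : (A → Bool) → (A → Bool) → ℕ)
    (hN : ∀ sA s'A, N sA s'A =
      (Finset.univ.filter (fun sB : B → Bool =>
        Sum.elim sA sB ∈ SI ∧ Sum.elim s'A sB ∈ SI)).card)
    (hdep : ∀ sA s'A tA t'A : A → Bool,
      (∀ r ∈ R, sA r = tA r) → (∀ r ∈ R, s'A r = t'A r) →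
      N sA s'A = N tA t'A)
    (ρA : Matrix (A → Bool) (A → Bool) ℂ)
    (hρA : ∀ sA s'A, ρA sA s'A =
      ∑ sB : B → Bool, (starRingEnd ℂ) (F (Sum.elim sA sB)) * F (Sum.elim s'A sB))
    (hherm : ρA.IsHermitian) :
    vonNeumannEntropy hherm ≤ (R.card : ℝ) * Real.log 2 := by
  classical
  set c := SI.card with hc
  have hc0 : 0 < c := Finset.card_pos.mpr hSI
  have hcR : (0:ℝ) < (c:ℝ) := by exact_mod_cast hc0
  -- basic term computation
  have hsq : ((Real.sqrt c : ℝ) : ℂ) * ((Real.sqrt c : ℝ) : ℂ) = (c : ℂ) := by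
    rw [← Complex.ofReal_mul, Real.mul_self_sqrt (Nat.cast_nonneg c)]
    norm_cast
  have hterm : ∀ s s' : A ⊕ B → Bool,
      (starRingEnd ℂ) (F s) * F s' =
      if s ∈ SI ∧ s' ∈ SI then (((1:ℝ)/c : ℝ) : ℂ) else 0 := by
    intro s s'
    rw [hF, hF]
    by_cases h1 : s ∈ SI <;> by_cases h2 : s' ∈ SI <;>
      simp only [h1, h2, if_true, if_false, true_and, and_true, and_false, false_and,
        map_zero, zero_mul, mul_zero]
    rw [map_div₀, map_one, Complex.conj_ofReal, div_mul_div_comm, one_mul, hsq]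
    push_cast
    ring
  -- entrywise formula
  have hentry : ∀ sA s'A, ρA sA s'A = (((N sA s'A : ℝ) / c : ℝ) : ℂ) := by
    intro sA s'A
    rw [hρA, hN]
    rw [Finset.sum_congr rfl (fun sB _ => hterm (Sum.elim sA sB) (Sum.elim s'A sB))]
    rw [Finset.sum_ite, Finset.sum_const, Finset.sum_const_zero, add_zero,
      nsmul_eq_mul]
    push_cast
    ring
  -- eigenvalues nonneg
  have heig : ∀ k, 0 ≤ hherm.eigenvalues k := by
    have hρM : ρA = (Matrix.of fun (sB : B → Bool) (sA : A → Bool) =>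
        F (Sum.elim sA sB)).conjTranspose *
        (Matrix.of fun (sB : B → Bool) (sA : A → Bool) => F (Sum.elim sA sB)) := by
      ext sA s'A
      rw [hρA]
      simp [Matrix.mul_apply, Matrix.conjTranspose_apply]
    exact aux_eig_nonneg _ hρM hherm
  -- trace = 1
  have htrace : ρA.trace = 1 := by
    have hdiag : ∀ sA, ρA sA sA = ∑ sB : B → Bool,
        (if Sum.elim sA sB ∈ SI then (((1:ℝ)/c : ℝ) : ℂ) else 0) := by
      intro sA
      rw [hρA]
      refine Finset.sum_congr rfl fun sB _ => ?_
      rw [hterm]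
      simp
    have hcount : ∑ sA : A → Bool, ∑ sB : B → Bool,
        (if Sum.elim sA sB ∈ SI then (((1:ℝ)/c : ℝ) : ℂ) else 0) =
        ∑ s : A ⊕ B → Bool, (if s ∈ SI then (((1:ℝ)/c : ℝ) : ℂ) else 0) := by
      rw [← (Equiv.sumArrowEquivProdArrow A B Bool).symm.sum_comp
        (fun s => if s ∈ SI then (((1:ℝ)/c : ℝ) : ℂ) else 0)]
      rw [Fintype.sum_prod_type]
      rfl
    rw [Matrix.trace]
    simp only [Matrix.diag]
    rw [Finset.sum_congr rfl fun sA _ => hdiag sA, hcount, Finset.sum_ite_mem,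
      Finset.univ_inter, Finset.sum_const, nsmul_eq_mul]
    push_cast
    rw [mul_one_div, div_self (by exact_mod_cast hc0.ne' : (c:ℂ) ≠ 0)]
  -- sum of eigenvalues = 1
  have hsum : ∑ k, hherm.eigenvalues k = 1 := by
    have h := aux_sum_eigenvalues hherm
    rw [htrace] at h
    exact_mod_cast h
  -- rank bound
  have hrank : ρA.rank ≤ 2 ^ R.card := by
    set ext' : (↥R → Bool) → (A → Bool) :=
      fun r a => if h : a ∈ R then r ⟨a, h⟩ else false with hext'
    set res : (A → Bool) → (↥R → Bool) := fun sA i => sA i with hres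
    have hfix : ∀ sA s'A, ρA (ext' (res sA)) (ext' (res s'A)) = ρA sA s'A := by
      intro sA s'A
      rw [hentry, hentry]
      have : N (ext' (res sA)) (ext' (res s'A)) = N sA s'A := by
        apply hdep
        · intro r hr; simp [hext', hres, hr]
        · intro r hr; simp [hext', hres, hr]
      rw [this]
    set E : Matrix (↥R → Bool) (A → Bool) ℂ :=
      Matrix.of fun (r : ↥R → Bool) (sA : A → Bool) =>
        (if res sA = r then (1:ℂ) else 0) with hE
    set G : Matrix (↥R → Bool) (↥R → Bool) ℂ :=
      Matrix.of fun r r' => ρA (ext' r) (ext' r') with hG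
    have hfact : ρA = E.transpose * (G * E) := by
      ext sA s'A
      simp only [Matrix.mul_apply, Matrix.transpose_apply, Matrix.of_apply, hE, hG,
        ite_mul, mul_ite, one_mul, zero_mul, mul_one, mul_zero,
        Finset.sum_ite_eq, Finset.sum_ite_eq', Finset.mem_univ, if_true]
      rw [hfix]
    calc ρA.rank ≤ _ := hfact ▸ Matrix.rank_mul_le_left _ _
      _ ≤ Fintype.card (↥R → Bool) := Matrix.rank_le_card_width _
      _ = 2 ^ R.card := by simp
  have hcard : (Finset.univ.filter fun k => hherm.eigenvalues k ≠ 0).card ≤ 2 ^ R.card := by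
    have h1 := hherm.rank_eq_card_non_zero_eigs
    rw [Fintype.card_subtype] at h1
    rw [← h1]
    exact hrank
  have hmain := aux_entropy_le_log hherm.eigenvalues heig hsum (2 ^ R.card) hcard
  refine hmain.trans ?_
  rw [show ((2 ^ R.card : ℕ) : ℝ) = (2:ℝ) ^ R.card by push_cast; ring,
    Real.log_pow]
end
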